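/- Let x, x̃ ∈ X, let ψ, ψ̃ ∈ (0,1), and let ε ∈ E(x) and ε̃ ∈ E(x̃) be deletion indicators with apply(x, ε) = apply(x̃, ε̃) (so in particular |ε| = |ε̃|). Then for every base classifier f̄ : X → Y and every class y ∈ Y, s_{f̄,ψ̃}(ε̃, x̃) = (ψ̃^{|x̃|} / ψ^{|x|}) · ρ(ψ, ψ̃)^{|ε|} · s_{f̄,ψ}(ε, x), where ρ(ψ, ψ̃) := ψ(1−ψ̃)/(ψ̃(1−ψ)). -/

import Mathlib

/-- Apply a deletion indicator: keep the tokens at positions `i` with `ε i = true`, in order. -/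
def applyDel {Ω : Type*} (x : List Ω) (ε : Fin x.length → Bool) : List Ω :=
  (List.finRange x.length).filterMap fun i => if ε i then some (x.get i) else none

/-- Number of retained tokens `|ε|`. -/
def retained {n : ℕ} (ε : Fin n → Bool) : ℕ :=
  (Finset.univ.filter fun i => ε i = true).card

/-- `q_ψ(ε|x) = ψ^{|x|-|ε|} (1-ψ)^{|ε|}`. -/
noncomputable def qdel {Ω : Type*} (ψ : ℝ) (x : List Ω) (ε : Fin x.length → Bool) : ℝ :=
  ψ ^ (x.length - retained ε) * (1 - ψ) ^ (retained ε)

/-- The score `s_{f̄,ψ}(ε, x) = q_ψ(ε|x)·1[f̄(apply(x,ε)) = y]`. -/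
noncomputable def score {Ω Y : Type*} [DecidableEq Y] (f : List Ω → Y) (y : Y) (ψ : ℝ)
    (x : List Ω) (ε : Fin x.length → Bool) : ℝ :=
  qdel ψ x ε * (if f (applyDel x ε) = y then 1 else 0)

lemma len_fm {α β : Type*} (p : α → Bool) (g : α → β) (l : List α) :
    (l.filterMap fun i => if p i then some (g i) else none).length = l.countP p := by
  induction l with
  | nil => simp
  | cons a t ih =>
    by_cases h : p a <;> simp [List.filterMap_cons, List.countP_cons, h, ih]

lemma countP_eq_sum {n : ℕ} (ε : Fin n → Bool) (l : List (Fin n)) :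
    List.countP ε l = (List.map (fun i => if ε i = true then 1 else 0) l).sum := by
  induction l with
  | nil => simp
  | cons a t ih =>
    by_cases h : ε a <;> simp [List.countP_cons, h, ih, Nat.add_comm]

lemma len_applyDel {Ω : Type*} (x : List Ω) (ε : Fin x.length → Bool) :
    (applyDel x ε).length = retained ε := by
  classical
  rw [applyDel, len_fm]
  simp [retained, Finset.card_filter, Fin.univ_def, Finset.sum, countP_eq_sum]

lemma retained_le {Ω : Type*} (x : List Ω) (ε : Fin x.length → Bool) :
    retained ε ≤ x.length := by
  have := (Finset.card_filter_le Finset.univ fun i => ε i = true)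
  simpa [retained] using this

/-- relation between scores at a pair of inputs with matching deletions. -/
theorem stmt1 {Ω Y : Type*} [DecidableEq Y] (x xt : List Ω)
    (ψ ψt : ℝ) (hψ : ψ ∈ Set.Ioo (0 : ℝ) 1) (hψt : ψt ∈ Set.Ioo (0 : ℝ) 1)
    (ε : Fin x.length → Bool) (εt : Fin xt.length → Bool)
    (happly : applyDel x ε = applyDel xt εt)
    (f : List Ω → Y) (y : Y) :
    score f y ψt xt εt =
      ψt ^ xt.length / ψ ^ x.length *
        (ψ * (1 - ψt) / (ψt * (1 - ψ))) ^ retained ε * score f y ψ x ε := by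
  obtain ⟨hψ0, hψ1⟩ := hψ
  obtain ⟨hψt0, hψt1⟩ := hψt
  have hret : retained εt = retained ε := by
    rw [← len_applyDel, ← len_applyDel, happly]
  have hle : retained ε ≤ x.length := retained_le x ε
  have hlet : retained ε ≤ xt.length := hret ▸ retained_le xt εt
  have hψne : ψ ≠ 0 := ne_of_gt hψ0
  have hψtne : ψt ≠ 0 := ne_of_gt hψt0
  have h1ψ : (1 : ℝ) - ψ ≠ 0 := by linarith
  have h1ψt : (1 : ℝ) - ψt ≠ 0 := by linarith
  rw [score, score, ← happly, qdel, qdel, hret]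
  rw [pow_sub₀ ψ hψne hle, pow_sub₀ ψt hψtne hlet]
  field_simp
  split_ifs with h
  · rw [div_pow, mul_pow, mul_pow]; field_simp
  · ring
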